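/- Let G be an even-hole-free graph and let I_1, I_2 be two maximum independent sets of G. Then the induced subgraph G[I_1 △ I_2] on the symmetric difference of I_1 and I_2 is acyclic (a forest). -/

import Mathlib

open SimpleGraph Fin.NatCast

lemma getVert_eq_support_getElem {V : Type*} {G : SimpleGraph V} {u v : V}
    (p : G.Walk u v) (n : ℕ) (h : n < p.support.length) :
    p.support[n] = p.getVert n := by
  induction p generalizing n with
  | nil => simp at h; subst h; simp [Walk.getVert]
  | cons ha q ih =>
    cases n with
    | zero => simp [Walk.getVert]
    | succ m =>
      simp only [Walk.support_cons, List.getElem_cons_succ, Walk.getVert_cons_succ]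
      exact ih m (by simp only [Walk.support_cons, List.length_cons] at h; omega)

lemma cycle_getVert_inj {V : Type*} {G : SimpleGraph V} {u : V} {p : G.Walk u u}
    (hp : p.IsCycle) {i j : ℕ} (hi : i < p.length) (hj : j < p.length)
    (h : p.getVert i = p.getVert j) : i = j := by
  have hnd := hp.support_nodup
  have hslen : p.support.length = p.length + 1 := p.length_support
  have htlen : p.support.tail.length = p.length := by simp [hslen]
  have key : ∀ m : ℕ, (hm : m < p.length) → p.support.tail[m]'(by omega) = p.getVert (m+1) := by
    intro m hm
    rw [List.getElem_tail]
    exact getVert_eq_support_getElem p (m+1) (by omega)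
  have hinj : ∀ a b : ℕ, a < p.length → b < p.length →
      p.getVert (a+1) = p.getVert (b+1) → a = b := by
    intro a b ha hb hab
    refine (hnd.getElem_inj_iff (hi := by omega) (hj := by omega)).mp ?_
    rw [key a ha, key b hb]; exact hab
  have h3 := hp.three_le_length
  rcases Nat.eq_zero_or_pos i with hi0 | hip
  · rcases Nat.eq_zero_or_pos j with hj0 | hjp
    · omega
    · subst hi0
      have : p.getVert j = p.getVert p.length :=
        (h.symm.trans p.getVert_zero).trans p.getVert_length.symm
      have := hinj (j-1) (p.length - 1) (by omega) (by omega)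
        (by rw [Nat.sub_add_cancel hjp, Nat.sub_add_cancel (by omega)]; exact this)
      omega
  · rcases Nat.eq_zero_or_pos j with hj0 | hjp
    · subst hj0
      have : p.getVert i = p.getVert p.length :=
        (h.trans p.getVert_zero).trans p.getVert_length.symm
      have := hinj (i-1) (p.length - 1) (by omega) (by omega)
        (by rw [Nat.sub_add_cancel hip, Nat.sub_add_cancel (by omega)]; exact this)
      omega
    · have := hinj (i-1) (j-1) (by omega) (by omega)
        (by rw [Nat.sub_add_cancel hip, Nat.sub_add_cancel hjp]; exact h)
      omega

def IsIndep {V : Type*} (G : SimpleGraph V) (A : Finset V) : Prop :=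
  ∀ a ∈ A, ∀ b ∈ A, ¬ G.Adj a b

def IsMaxIndep {V : Type*} [Fintype V] (G : SimpleGraph V) (A : Finset V) : Prop :=
  IsIndep G A ∧ ∀ B : Finset V, IsIndep G B → B.card ≤ A.card

/-- `G` has an (induced) hole of length `m`: an induced cycle on `m` vertices. -/
def HasHole {V : Type*} (G : SimpleGraph V) (m : ℕ) : Prop :=
  ∃ f : Fin m → V, Function.Injective f ∧
    ∀ i j : Fin m, G.Adj (f i) (f j) ↔
      (((i : ℕ) + 1) % m = j ∨ ((j : ℕ) + 1) % m = i)

/-- `G` is even-hole-free: no induced cycle of even length at least 4. -/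
def EvenHoleFree {V : Type*} (G : SimpleGraph V) : Prop :=
  ∀ m : ℕ, 4 ≤ m → Even m → ¬ HasHole G m

/-- In an even-hole-free graph, the induced subgraph on the symmetric difference of
two maximum independent sets is acyclic. -/
theorem evenHoleFree_symmDiff_acyclic {V : Type*} [Fintype V] [DecidableEq V]
    (G : SimpleGraph V) (hG : EvenHoleFree G)
    (I₁ I₂ : Finset V) (h₁ : IsMaxIndep G I₁) (h₂ : IsMaxIndep G I₂) :
    (G.induce (symmDiff (I₁ : Set V) (I₂ : Set V))).IsAcyclic := by
  classical
  set S : Set V := symmDiff (I₁ : Set V) (I₂ : Set V) with hS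
  intro a c hc
  have hSalt : ∀ x ∈ S, ∀ y ∈ S, G.Adj x y → (x ∈ I₁ ↔ y ∉ I₁) := by
    intro x hx y hy hxy
    rw [hS, Set.mem_symmDiff] at hx hy
    simp only [Finset.mem_coe] at hx hy
    have h11 : ¬(x ∈ I₁ ∧ y ∈ I₁) := fun ⟨h, h'⟩ => h₁.1 x h y h' hxy
    have h22 : ¬(x ∈ I₂ ∧ y ∈ I₂) := fun ⟨h, h'⟩ => h₂.1 x h y h' hxy
    tauto
  set P : ℕ → Prop := fun n => 3 ≤ n ∧ ∃ f : Fin n → V, (∀ i, f i ∈ S) ∧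
      Function.Injective f ∧
      ∀ i j : Fin n, ((i : ℕ) + 1) % n = (j : ℕ) → G.Adj (f i) (f j) with hPdef
  have hP0 : P c.length := by
    have h3 := hc.three_le_length
    refine ⟨h3, fun i => ↑(c.getVert ↑i), fun i => (c.getVert ↑i).2, ?_, ?_⟩
    · intro i j hij
      exact Fin.ext (cycle_getVert_inj hc i.isLt j.isLt (Subtype.val_injective hij))
    · intro i j hij
      have hadj := c.adj_getVert_succ (i := (i : ℕ)) i.isLt
      rw [SimpleGraph.comap_adj] at hadj
      beta_reduce
      by_cases hlt : (i : ℕ) + 1 < c.length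
      · rw [Nat.mod_eq_of_lt hlt] at hij
        rw [← hij]
        exact hadj
      · have hie : (i : ℕ) + 1 = c.length := by have := i.isLt; omega
        have hj0 : (j : ℕ) = 0 := by rw [← hij, hie, Nat.mod_self]
        rw [hie, c.getVert_length] at hadj
        have : c.getVert (j : ℕ) = c.getVert 0 := by rw [hj0]
        rw [this, c.getVert_zero]
        exact hadj
  have hex : ∃ n, P n := ⟨_, hP0⟩
  set n := Nat.find hex with hn
  obtain ⟨h3n, f, hfS, hfinj, hfadjv⟩ : P n := Nat.find_spec hex
  haveI : NeZero n := ⟨by intro h; rw [h] at h3n; omega⟩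
  have hone : ((1 : Fin n) : ℕ) = 1 := by rw [Fin.val_one', Nat.mod_eq_of_lt (by omega)]
  have hfadj : ∀ i : Fin n, G.Adj (f i) (f (i + 1)) := by
    intro i
    exact hfadjv i (i + 1) (by rw [Fin.val_add, hone])
  -- chord-freeness by minimality
  have hole : ∀ i j : Fin n, G.Adj (f i) (f j) → (i + 1 = j ∨ j + 1 = i) := by
    intro i j hadj
    by_contra hcon
    push_neg at hcon
    obtain ⟨hc1, hc2⟩ := hcon
    have hij : i ≠ j := fun h => G.irrefl (h ▸ hadj)
    set k : ℕ := ((j - i : Fin n) : ℕ) with hk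
    set k' : ℕ := ((i - j : Fin n) : ℕ) with hk'
    have hkn : k < n := (j - i).isLt
    have hk'n : k' < n := (i - j).isLt
    have hk0 : k ≠ 0 := by
      intro h0
      have hz : j - i = 0 := Fin.ext (by rw [Fin.val_zero, ← hk]; exact h0)
      exact hij (sub_eq_zero.mp hz).symm
    have hk'0 : k' ≠ 0 := by
      intro h0
      have hz : i - j = 0 := Fin.ext (by rw [Fin.val_zero, ← hk']; exact h0)
      exact hij (sub_eq_zero.mp hz)
    have hk1 : k ≠ 1 := by
      intro h1
      apply hc1
      have hji : j - i = 1 := Fin.ext (by rw [hone, ← hk]; exact h1)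
      have := sub_eq_iff_eq_add.mp hji
      rw [this]; abel
    have hk'1 : k' ≠ 1 := by
      intro h1
      apply hc2
      have hji : i - j = 1 := Fin.ext (by rw [hone, ← hk']; exact h1)
      have := sub_eq_iff_eq_add.mp hji
      rw [this]; abel
    have hsum : k + k' = n := by
      have hz : (j - i) + (i - j) = 0 := by abel
      have hzz := congrArg (Fin.val) hz
      rw [Fin.val_add, ← hk, ← hk'] at hzz
      simp only [Fin.val_zero] at hzz
      rcases Nat.lt_or_ge (k + k') n with h | h
      · rw [Nat.mod_eq_of_lt h] at hzz; omega
      · have h2 : k + k' < 2 * n := by omega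
        have : (k + k') % n = k + k' - n := by
          rw [Nat.mod_eq_sub_mod (by omega), Nat.mod_eq_of_lt (by omega)]
        omega
    have hk2 : 2 ≤ k := by omega
    have hkn2 : k + 1 < n := by omega
    have hPk : P (k + 1) := by
      refine ⟨by omega, fun t => f (i + Fin.castLE (by omega) t), fun t => hfS _, ?_, ?_⟩
      · intro t s hts
        exact Fin.castLE_injective _ (add_left_cancel (hfinj hts))
      · intro t s hts
        beta_reduce
        rcases Nat.lt_or_ge ((t : ℕ) + 1) (k + 1) with hlt | hge
        · rw [Nat.mod_eq_of_lt hlt] at hts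
          have he : (Fin.castLE (by omega : k + 1 ≤ n) s) =
              Fin.castLE (by omega) t + 1 := by
            apply Fin.ext
            rw [Fin.coe_castLE, Fin.val_add, Fin.coe_castLE, hone, ← hts,
              Nat.mod_eq_of_lt (by omega)]
          rw [he, ← add_assoc]
          exact hfadj _
        · have ht : (t : ℕ) = k := by have := t.isLt; omega
          have hs0 : (s : ℕ) = 0 := by
            rw [← hts, ht, Nat.mod_self]
          have hsz : s = 0 := Fin.ext (by rw [hs0, Fin.val_zero])
          have hcj : Fin.castLE (by omega : k + 1 ≤ n) t = j - i := by
            apply Fin.ext; rw [Fin.coe_castLE, ht, hk]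
          rw [hsz, hcj]
          have hij2 : i + (j - i) = j := by abel
          have hz0 : (Fin.castLE (by omega : k + 1 ≤ n) (0 : Fin (k+1))) = 0 :=
            Fin.ext (by simp)
          rw [hz0, add_zero, hij2]
          exact hadj.symm
    exact Nat.find_min hex (by omega) hPk
  -- parity
  set F : ℕ → V := fun m => f ((m : Fin n)) with hF
  have hFadj : ∀ m : ℕ, G.Adj (F m) (F (m + 1)) := by
    intro m
    have hcast : ((m + 1 : ℕ) : Fin n) = (m : Fin n) + 1 := by push_cast; ring
    show G.Adj (f ((m : ℕ) : Fin n)) (f ((m + 1 : ℕ) : Fin n))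
    rw [hcast]
    exact hfadj _
  have halt : ∀ m : ℕ, (F m ∈ I₁ ↔ (Even m ↔ F 0 ∈ I₁)) := by
    intro m
    induction m with
    | zero => simp
    | succ m ih =>
      have hs := hSalt (F m) (hfS _) (F (m + 1)) (hfS _) (hFadj m)
      have hpar : Even (m + 1) ↔ ¬ Even m := Nat.even_add_one
      tauto
  have heven : Even n := by
    have h := halt n
    have hFn : F n = F 0 := by
      show f ((n : ℕ) : Fin n) = f ((0 : ℕ) : Fin n)
      rw [Fin.natCast_self]; norm_num
    rw [hFn] at h
    tauto
  -- build the hole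
  have hhole : HasHole G n := by
    refine ⟨f, hfinj, fun i j => ?_⟩
    constructor
    · intro hadj
      rcases hole i j hadj with h | h
      · left; rw [← h, Fin.val_add, hone]
      · right; rw [← h, Fin.val_add, hone]
    · rintro (h | h)
      · exact hfadjv i j h
      · exact (hfadjv j i h).symm
  have h4 : 4 ≤ n := by
    obtain ⟨t, ht⟩ := heven; omega
  exact hG n h4 heven hhole
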